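/- Let n ≥ 1 and let x : [n] → ℕ be a load vector with Σ_{i=1}^n x_i = m ≥ 1. Let κ := |{i ∈ [n] : x_i > 0}| and F := n − κ. Let Z_1, …, Z_κ be independent random variables, each uniformly distributed on [n], and define x'_i := x_i − 1_{x_i > 0} + Σ_{j=1}^{κ} 1_{Z_j = i} for each i ∈ [n]. Then E[Σ_{i=1}^n (x'_i)²] ≤ Σ_{i=1}^n (x_i)² − 2·(m/n)·F + 2n. -/

import Mathlib

open MeasureTheory ProbabilityTheory Finset
open scoped ENNReal

/-- The number of non-empty bins of a load vector. -/
def kappa {n : ℕ} (x : Fin n → ℕ) : ℕ := (Finset.univ.filter fun i => 0 < x i).card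

/-- **Lemma 3.1 (quadratic potential drop).** Let `x : [n] → ℕ` be a load vector
with `m ≥ 1` balls, `κ` non-empty bins and `F = n - κ` empty bins. If one ball is
removed from each non-empty bin and re-allocated to a bin chosen independently and
uniformly at random, then the expected quadratic potential after the round is at most
`Υ - 2·(m/n)·F + 2n`. -/
theorem rbb_quadratic_potential_drop
    (n m : ℕ) (hn : 1 ≤ n) (hm : 1 ≤ m)
    (x : Fin n → ℕ) (hx : (∑ i, x i) = m)
    (Ω : Type) [MeasurableSpace Ω] (P : Measure Ω) [IsProbabilityMeasure P]
    (Z : Fin (kappa x) → Ω → Fin n)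
    (hmeas : ∀ j, Measurable (Z j))
    (hindep : iIndepFun Z P)
    (hunif : ∀ j i, P {ω | Z j ω = i} = (n : ℝ≥0∞)⁻¹) :
    (∫ ω, (∑ i, ((x i - (if 0 < x i then 1 else 0)
        + (Finset.univ.filter fun j => Z j ω = i).card : ℕ) : ℝ) ^ 2) ∂P)
      ≤ (∑ i, (x i : ℝ) ^ 2) - 2 * ((m : ℝ) / n) * ((n - kappa x : ℕ) : ℝ) + 2 * n := by
  classical
  have hn0 : (0:ℝ) < n := by exact_mod_cast hn
  have hnne : (n:ℝ) ≠ 0 := ne_of_gt hn0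
  set r : ℝ := (n:ℝ)⁻¹ with hrdef
  have hr0 : 0 ≤ r := by positivity
  have hnr : (n:ℝ) * r = 1 := mul_inv_cancel₀ hnne
  have hκle : kappa x ≤ n := by
    simpa [kappa] using Finset.card_filter_le (Finset.univ : Finset (Fin n)) (fun i => 0 < x i)
  have hκn : ((kappa x : ℕ):ℝ) ≤ n := by exact_mod_cast hκle
  -- indicator functions
  set f : Fin (kappa x) → Fin n → Ω → ℝ :=
    fun j i => Set.indicator (Z j ⁻¹' {i}) (fun _ => (1:ℝ)) with hfdef
  have hfs : ∀ (j : Fin (kappa x)) (i : Fin n), MeasurableSet (Z j ⁻¹' {i}) :=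
    fun j i => hmeas j (measurableSet_singleton i)
  have hP : ∀ (j : Fin (kappa x)) (i : Fin n), P (Z j ⁻¹' {i}) = (n : ℝ≥0∞)⁻¹ :=
    fun j i => hunif j i
  have hfint : ∀ j i, Integrable (f j i) P := fun j i =>
    (integrable_const (1:ℝ)).indicator (hfs j i)
  have hEtoReal : ((n : ℝ≥0∞)⁻¹).toReal = r := by
    rw [hrdef]; simp
  have hEf : ∀ j i, ∫ ω, f j i ω ∂P = r := by
    intro j i
    rw [hfdef]
    rw [integral_indicator_const (1:ℝ) (hfs j i), measureReal_def, hP j i, hEtoReal, smul_eq_mul, mul_one]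
  have hmulrw : ∀ (j k : Fin (kappa x)) (i : Fin n), (fun ω => f j i ω * f k i ω)
      = Set.indicator (Z j ⁻¹' {i} ∩ Z k ⁻¹' {i}) (fun _ => (1:ℝ)) := by
    intro j k i; funext ω
    simp only [hfdef]
    rw [← Set.inter_indicator_mul (fun _ => (1:ℝ)) (fun _ => (1:ℝ)) ω]
    simp [Set.indicator_apply]
  have hffint : ∀ (j k : Fin (kappa x)) (i : Fin n),
      Integrable (fun ω => f j i ω * f k i ω) P := by
    intro j k i
    rw [hmulrw]
    exact (integrable_const (1:ℝ)).indicator ((hfs j i).inter (hfs k i))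
  have hEff : ∀ (j k : Fin (kappa x)) (i : Fin n),
      ∫ ω, f j i ω * f k i ω ∂P = if j = k then r else r * r := by
    intro j k i
    rcases eq_or_ne j k with h | h
    · subst h
      rw [if_pos rfl, hmulrw, Set.inter_self,
        integral_indicator_const (1:ℝ) (hfs j i), measureReal_def, hP j i, hEtoReal, smul_eq_mul, mul_one]
    · rw [if_neg h, hmulrw, integral_indicator_const (1:ℝ) ((hfs j i).inter (hfs k i))]
      have hmeq := (hindep.indepFun h).measure_inter_preimage_eq_mul
        ({i} : Set (Fin n)) ({i} : Set (Fin n))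
        (measurableSet_singleton i) (measurableSet_singleton i)
      rw [measureReal_def, hmeq, hP j i, hP k i, smul_eq_mul, mul_one, ENNReal.toReal_mul, hEtoReal]
  have hcard : ∀ (ω : Ω) (i : Fin n),
      (((Finset.univ.filter fun j => Z j ω = i).card : ℕ) : ℝ) = ∑ j, f j i ω := by
    intro ω i
    rw [Finset.card_filter]
    push_cast
    refine Finset.sum_congr rfl fun j _ => ?_
    simp [hfdef, Set.indicator_apply]
  have hyx : ∀ i, ((x i - (if 0 < x i then 1 else 0) : ℕ):ℝ)
      = (x i:ℝ) - (if 0 < x i then (1:ℝ) else 0) := by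
    intro i
    split_ifs with h
    · rw [Nat.cast_sub h]; norm_num
    · simp
  -- rewrite the integrand
  have hpt : ∀ ω : Ω, (∑ i, ((x i - (if 0 < x i then 1 else 0)
        + (Finset.univ.filter fun j => Z j ω = i).card : ℕ) : ℝ) ^ 2)
      = ∑ i, (((x i:ℝ) - (if 0 < x i then (1:ℝ) else 0))^2
          + 2*((x i:ℝ) - (if 0 < x i then (1:ℝ) else 0))*(∑ j, f j i ω)
          + ∑ j, ∑ k, f j i ω * f k i ω) := by
    intro ω
    refine Finset.sum_congr rfl fun i _ => ?_
    have h1 : ((x i - (if 0 < x i then 1 else 0)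
        + (Finset.univ.filter fun j => Z j ω = i).card : ℕ) : ℝ)
        = ((x i:ℝ) - (if 0 < x i then (1:ℝ) else 0)) + ∑ j, f j i ω := by
      rw [Nat.cast_add, hyx i, hcard ω i]
    rw [h1]
    have h2 := Finset.sum_mul_sum (Finset.univ : Finset (Fin (kappa x)))
      (Finset.univ : Finset (Fin (kappa x))) (fun j => f j i ω) (fun k => f k i ω)
    rw [← h2]; ring
  have hint1 : ∀ i : Fin n, Integrable (fun ω => ∑ j, f j i ω) P :=
    fun i => integrable_finset_sum _ fun j _ => hfint j i
  have hint1' : ∀ i : Fin n, Integrable (fun ω =>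
      2*((x i:ℝ) - (if 0 < x i then (1:ℝ) else 0))*(∑ j, f j i ω)) P :=
    fun i => (hint1 i).const_mul _
  have hint2 : ∀ i : Fin n, Integrable (fun ω => ∑ j, ∑ k, f j i ω * f k i ω) P :=
    fun i => integrable_finset_sum _ fun j _ => integrable_finset_sum _ fun k _ => hffint j k i
  have hint12 : ∀ i : Fin n, Integrable (fun ω =>
      ((x i:ℝ) - (if 0 < x i then (1:ℝ) else 0))^2
        + 2*((x i:ℝ) - (if 0 < x i then (1:ℝ) else 0))*(∑ j, f j i ω)) P :=
    fun i => (integrable_const _).add (hint1' i)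
  have hintterm : ∀ i : Fin n, Integrable (fun ω =>
      ((x i:ℝ) - (if 0 < x i then (1:ℝ) else 0))^2
          + 2*((x i:ℝ) - (if 0 < x i then (1:ℝ) else 0))*(∑ j, f j i ω)
          + ∑ j, ∑ k, f j i ω * f k i ω) P :=
    fun i => (hint12 i).add (hint2 i)
  have hI1 : ∀ i : Fin n, ∫ ω, (∑ j, f j i ω) ∂P = (kappa x : ℝ) * r := by
    intro i
    rw [integral_finset_sum _ fun j _ => hfint j i]
    simp [hEf, Finset.sum_const, Finset.card_univ, nsmul_eq_mul]
  have hI2 : ∀ i : Fin n, ∫ ω, (∑ j, ∑ k, f j i ω * f k i ω) ∂P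
      = (kappa x : ℝ) * ((kappa x : ℝ) * (r*r) + (r - r*r)) := by
    intro i
    rw [integral_finset_sum _ fun j _ => integrable_finset_sum _ fun k _ => hffint j k i]
    have hrow : ∀ j : Fin (kappa x),
        (∫ ω, ∑ k, f j i ω * f k i ω ∂P) = (kappa x : ℝ) * (r*r) + (r - r*r) := by
      intro j
      rw [integral_finset_sum _ fun k _ => hffint j k i]
      have h3 : ∀ k : Fin (kappa x), ∫ ω, f j i ω * f k i ω ∂P
          = r*r + (if j = k then r - r*r else 0) := by
        intro k
        rw [hEff j k i]
        split_ifs <;> ring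
      rw [Finset.sum_congr rfl fun k _ => h3 k, Finset.sum_add_distrib,
        Finset.sum_const, Finset.card_univ, Fintype.card_fin, nsmul_eq_mul,
        Finset.sum_ite_eq Finset.univ j (fun _ => r - r*r), if_pos (Finset.mem_univ j)]
    rw [Finset.sum_congr rfl fun j _ => hrow j, Finset.sum_const, Finset.card_univ,
      Fintype.card_fin, nsmul_eq_mul]
  -- compute the integral
  have hE : (∫ ω, (∑ i, ((x i - (if 0 < x i then 1 else 0)
        + (Finset.univ.filter fun j => Z j ω = i).card : ℕ) : ℝ) ^ 2) ∂P)
      = ∑ i, (((x i:ℝ) - (if 0 < x i then (1:ℝ) else 0))^2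
          + 2*((x i:ℝ) - (if 0 < x i then (1:ℝ) else 0))*((kappa x : ℝ) * r)
          + (kappa x : ℝ) * ((kappa x : ℝ) * (r*r) + (r - r*r))) := by
    rw [integral_congr_ae (Filter.Eventually.of_forall hpt)]
    rw [integral_finset_sum _ fun i _ => hintterm i]
    refine Finset.sum_congr rfl fun i _ => ?_
    rw [integral_add (hint12 i) (hint2 i),
      integral_add (integrable_const _) (hint1' i),
      integral_const, integral_const_mul, hI1 i, hI2 i]
    simp
  rw [hE]
  -- sums of the deterministic quantities
  have hsum_x : ∑ i, (x i:ℝ) = m := by exact_mod_cast congrArg (Nat.cast : ℕ → ℝ) hx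
  have hsum_e : ∑ i, (if 0 < x i then (1:ℝ) else 0) = (kappa x : ℝ) := by
    rw [Finset.sum_boole]
    simp [kappa]
  have hsum_xe : ∑ i, (x i:ℝ) * (if 0 < x i then (1:ℝ) else 0) = m := by
    have h : ∀ i, (x i:ℝ) * (if 0 < x i then (1:ℝ) else 0) = (x i:ℝ) := by
      intro i
      split_ifs with h
      · ring
      · have : x i = 0 := by omega
        simp [this]
    rw [Finset.sum_congr rfl fun i _ => h i, hsum_x]
  have hexp : ∀ i : Fin n, (((x i:ℝ) - (if 0 < x i then (1:ℝ) else 0))^2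
          + 2*((x i:ℝ) - (if 0 < x i then (1:ℝ) else 0))*((kappa x : ℝ) * r)
          + (kappa x : ℝ) * ((kappa x : ℝ) * (r*r) + (r - r*r)))
      = (x i:ℝ)^2 - 2*((x i:ℝ) * (if 0 < x i then (1:ℝ) else 0))
        + (if 0 < x i then (1:ℝ) else 0)
        + (2*((kappa x : ℝ) * r))*(x i:ℝ)
        - (2*((kappa x : ℝ) * r))*(if 0 < x i then (1:ℝ) else 0)
        + (kappa x : ℝ) * ((kappa x : ℝ) * (r*r) + (r - r*r)) := by
    intro i
    split_ifs <;> ring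
  rw [Finset.sum_congr rfl fun i _ => hexp i]
  have hsplit : ∑ i, ((x i:ℝ)^2 - 2*((x i:ℝ) * (if 0 < x i then (1:ℝ) else 0))
        + (if 0 < x i then (1:ℝ) else 0)
        + (2*((kappa x : ℝ) * r))*(x i:ℝ)
        - (2*((kappa x : ℝ) * r))*(if 0 < x i then (1:ℝ) else 0)
        + (kappa x : ℝ) * ((kappa x : ℝ) * (r*r) + (r - r*r)))
      = (∑ i, (x i:ℝ)^2) - 2*(m:ℝ) + (kappa x : ℝ)
        + (2*((kappa x : ℝ) * r))*(m:ℝ) - (2*((kappa x : ℝ) * r))*(kappa x : ℝ)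
        + (n:ℝ) * ((kappa x : ℝ) * ((kappa x : ℝ) * (r*r) + (r - r*r))) := by
    rw [Finset.sum_add_distrib, Finset.sum_sub_distrib, Finset.sum_add_distrib,
      Finset.sum_add_distrib, Finset.sum_sub_distrib,
      ← Finset.mul_sum, ← Finset.mul_sum, ← Finset.mul_sum,
      hsum_x, hsum_e, hsum_xe, Finset.sum_const, Finset.card_univ, Fintype.card_fin,
      nsmul_eq_mul]
  rw [hsplit]
  have hcastnk : ((n - kappa x : ℕ):ℝ) = (n:ℝ) - (kappa x : ℝ) := by
    rw [Nat.cast_sub hκle]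
  rw [hcastnk]
  have hm1 : (1:ℝ) ≤ m := by exact_mod_cast hm
  have hκ0 : (0:ℝ) ≤ (kappa x : ℝ) := by positivity
  rw [div_eq_mul_inv, ← hrdef]
  have q1 : (n:ℝ)*((kappa x : ℝ)*((kappa x : ℝ)*(r*r) + (r - r*r)))
      = (kappa x : ℝ)*(kappa x : ℝ)*r + (kappa x : ℝ) - (kappa x : ℝ)*r := by
    linear_combination ((kappa x : ℝ)*(kappa x : ℝ)*r + (kappa x : ℝ) - (kappa x : ℝ)*r) * hnr
  have q2 : 2*((m:ℝ)*r)*((n:ℝ) - (kappa x : ℝ)) = 2*(m:ℝ) - 2*(m:ℝ)*r*(kappa x : ℝ) := by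
    linear_combination (2*(m:ℝ)) * hnr
  rw [q1, q2]
  have h1 : (0:ℝ) ≤ (kappa x : ℝ) * r := mul_nonneg hκ0 hr0
  have h2 : (0:ℝ) ≤ (kappa x : ℝ) * (kappa x : ℝ) * r := mul_nonneg (mul_nonneg hκ0 hκ0) hr0
  nlinarith [hκn, h1, h2]
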